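/- Swapping adjacent restrictions commutes with transitions: for π-calculus-style systems, if (νu)(νv)T →α S', then (νv)(νu)T →α R' for some R' structurally congruent to S', where the derivation of the original transition ends with two applications among the rules RES and OPEN. -/

import Mathlib

/-- Systems of a π-calculus-like language with located prefixes. -/
inductive System where
  | nil : System
  | par : System → System → System
  | nu : ℕ → System → System
  /-- located input prefix `x(u⃗).P` at location `n`: `inp n x u⃗ P` -/
  | inp : ℕ → ℕ → List ℕ → System → System
  /-- located output prefix `x̄⟨u⃗⟩.P` at location `n`: `out n x u⃗ P` -/
  | out : ℕ → ℕ → List ℕ → System → System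

/-- Transition labels: τ, input `x(u⃗)@n`, output `(νw⃗)x̄⟨u⃗⟩@n`. -/
inductive PLabel where
  | tau : PLabel
  | inp : ℕ → List ℕ → ℕ → PLabel
  | out : List ℕ → ℕ → List ℕ → ℕ → PLabel

/-- Free names of a system. -/
def fnSys : System → Finset ℕ
  | .nil => ∅
  | .par P Q => fnSys P ∪ fnSys Q
  | .nu z P => fnSys P \ {z}
  | .inp n x us P => {x, n} ∪ (fnSys P \ us.toFinset)
  | .out n x us P => {x, n} ∪ us.toFinset ∪ fnSys P

/-- Payload names of an input label. -/
def piL : PLabel → Finset ℕ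
  | .inp _ us _ => us.toFinset
  | _ => ∅

/-- Extruded (bound-output) names of an output label. -/
def peL : PLabel → Finset ℕ
  | .out ws _ _ _ => ws.toFinset
  | _ => ∅

/-- Free names of a label. -/
def fnL : PLabel → Finset ℕ
  | .tau => ∅
  | .inp x us n => {x, n} ∪ us.toFinset
  | .out ws x us n => ({x, n} ∪ us.toFinset) \ ws.toFinset

/-- The labelled transition system. -/
inductive Step : System → PLabel → System → Prop
  | out {n x us P} : Step (.out n x us P) (.out [] x us n) P
  | inp {n x us P} : Step (.inp n x us P) (.inp x us n) P
  | parL {P P' Q α} : Step P α P' → Step (.par P Q) α (.par P' Q)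
  | parR {P Q Q' α} : Step Q α Q' → Step (.par P Q) α (.par P Q')
  | commL {P P' Q Q' x us n} :
      Step P (.out [] x us n) P' → Step Q (.inp x us n) Q' →
      Step (.par P Q) .tau (.par P' Q')
  | commR {P P' Q Q' x us n} :
      Step P (.inp x us n) P' → Step Q (.out [] x us n) Q' →
      Step (.par P Q) .tau (.par P' Q')
  | res {z P P' α} : Step P α P' → z ∉ fnL α → Step (.nu z P) α (.nu z P')
  | open_ {z P P' ws x us n} :
      Step P (.out ws x us n) P' → z ∈ us → z ≠ x → z ≠ n → z ∉ ws →
      Step (.nu z P) (.out (z :: ws) x us n) P'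

/-- Structural congruence. -/
inductive SC : System → System → Prop
  | refl (P) : SC P P
  | symm {P Q} : SC P Q → SC Q P
  | trans {P Q R} : SC P Q → SC Q R → SC P R
  | swap (u v P) : SC (.nu u (.nu v P)) (.nu v (.nu u P))
  | gc {z P} : z ∉ fnSys P → SC (.nu z P) P
  | parNil (P) : SC (.par P .nil) P
  | parComm (P Q) : SC (.par P Q) (.par Q P)
  | parAssoc (P Q R) : SC (.par (.par P Q) R) (.par P (.par Q R))
  | ctxPar {P P' Q Q'} : SC P P' → SC Q Q' → SC (.par P Q) (.par P' Q')
  | ctxNu {P P'} (z) : SC P P' → SC (.nu z P) (.nu z P')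

/-- Labels identified up to permutation of their extruded name sets. -/
inductive LEq : PLabel → PLabel → Prop
  | tau : LEq .tau .tau
  | inp (x us n) : LEq (.inp x us n) (.inp x us n)
  | out {ws ws' : List ℕ} (x us n) : ws.Perm ws' →
      LEq (.out ws x us n) (.out ws' x us n)


lemma LEq.refl : ∀ α : PLabel, LEq α α
  | .tau => .tau
  | .inp x us n => .inp x us n
  | .out ws x us n => .out x us n (List.Perm.refl ws)

theorem swap_restrictions_step (u v : ℕ) (T S' : System) (α : PLabel)
    (h : Step (.nu u (.nu v T)) α S') :
    ∃ (β : PLabel) (R' : System),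
      Step (.nu v (.nu u T)) β R' ∧ LEq α β ∧ SC S' R' := by
  cases h with
  | res h1 hu =>
    cases h1 with
    | res h2 hv =>
      exact ⟨_, _, .res (.res h2 hu) hv, LEq.refl _, .swap _ _ _⟩
    | open_ h2 hv1 hv2 hv3 hv4 =>
      rename_i ws x us n
      by_cases huv : u = v
      · subst huv
        exact ⟨_, _, .res (.open_ h2 hv1 hv2 hv3 hv4) hu, LEq.refl _, .refl _⟩
      · have hu' : u ∉ fnL (.out ws x us n) := by
          simp only [fnL, Finset.mem_sdiff, List.toFinset_cons, Finset.mem_insert,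
            not_and, not_not] at hu ⊢
          intro hmem
          rcases hu hmem with h | h
          · exact absurd h huv
          · exact h
        exact ⟨_, _, .open_ (.res h2 hu') hv1 hv2 hv3 hv4, LEq.refl _, .refl _⟩
  | open_ h1 hu1 hu2 hu3 hu4 =>
    rename_i ws x us n
    cases h1 with
    | res h2 hv =>
      have hv' : v ∉ fnL (.out (u :: ws) x us n) := by
        simp only [fnL, Finset.mem_sdiff, List.toFinset_cons, Finset.mem_insert,
          not_and, not_not] at hv ⊢
        intro hmem
        exact Or.inr (hv hmem)
      exact ⟨_, _, .res (.open_ h2 hu1 hu2 hu3 hu4) hv', LEq.refl _, .refl _⟩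
    | open_ h2 hv1 hv2 hv3 hv4 =>
      rename_i ws'
      have huv : u ≠ v := fun e => hu4 (e ▸ List.mem_cons_self)
      have hu4' : u ∉ ws' := fun hm => hu4 (List.mem_cons_of_mem _ hm)
      have hv4' : v ∉ u :: ws' := by
        intro hm
        rcases List.mem_cons.mp hm with e | hm
        · exact huv e.symm
        · exact hv4 hm
      exact ⟨_, _, .open_ (.open_ h2 hu1 hu2 hu3 hu4') hv1 hv2 hv3 hv4',
        LEq.out _ _ _ (List.Perm.swap _ _ _), .refl _⟩
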